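/- Let (Y;S) be a faithful primitive representation with |Y| > 2, where S is a semigroup of transformations of the finite set Y, and let J be the set of minimal functions of (Y;S). Then: (1) S^Y is a subsemigroup of Ω(J^Y), i.e., for every s ∈ S^Y and j ∈ J^Y both s∘j and j∘s lie in J^Y; and (2) the representation (Y; Ω(J^Y)) is faithful and primitive, and its set of minimal functions is exactly J. -/
import Mathlib


section TransformationReps

variable {Y : Type*}

/-- A constant function. -/
def IsConst (f : Y → Y) : Prop := ∃ c, ∀ y, f y = c

/-- `W` is a minimal set of the representation given by the set `T` of transformations:
it is a non-singleton image set which is minimal among non-singleton image sets. -/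
def MinSet (T : Set (Y → Y)) (W : Set Y) : Prop :=
  2 ≤ W.ncard ∧ (∃ s ∈ T, Set.range s = W) ∧
    ∀ t ∈ T, 2 ≤ (Set.range t).ncard → Set.range t ⊆ W → Set.range t = W

/-- A minimal function: an element of `T` whose image is a minimal set. -/
def MinFun (T : Set (Y → Y)) (f : Y → Y) : Prop :=
  f ∈ T ∧ MinSet T (Set.range f)

/-- The representation given by the set `T` of transformations of `Y` is primitive. -/
def PrimitiveRep (T : Set (Y → Y)) : Prop :=
  ∀ θ : Y → Y → Prop, Equivalence θ →
    (∀ a b, θ a b → ∀ f ∈ T, θ (f a) (f b)) →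
    (∀ a b, θ a b → a = b) ∨ (∀ a b, θ a b)

/-- Expansion by constants: `T` together with all constant functions of `Y`. -/
def ExpandConst (T : Set (Y → Y)) : Set (Y → Y) := T ∪ {f | IsConst f}

/-- The translational hull `Ω(T)` of a set `T` of transformations of `Y`. -/
def Omega (T : Set (Y → Y)) : Set (Y → Y) :=
  {f | ∀ t ∈ T, f ∘ t ∈ T ∧ t ∘ f ∈ T}

end TransformationReps

section Aux
variable {Y : Type*} [Fintype Y] {S : Set (Y → Y)}

lemma aux_not_isConst_iff [Nonempty Y] (f : Y → Y) :
    ¬ IsConst f ↔ 2 ≤ (Set.range f).ncard := by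
  rw [show (2 ≤ (Set.range f).ncard) ↔ 1 < (Set.range f).ncard from Iff.rfl,
    Set.one_lt_ncard (Set.toFinite _)]
  constructor
  · intro h
    have y0 := Classical.arbitrary Y
    have hy : ∃ y, f y ≠ f y0 := by
      by_contra h'
      push_neg at h'
      exact h ⟨f y0, h'⟩
    obtain ⟨y, hy⟩ := hy
    exact ⟨f y, ⟨y, rfl⟩, f y0, ⟨y0, rfl⟩, hy⟩
  · rintro ⟨a, ⟨x, rfl⟩, b, ⟨y, rfl⟩, hab⟩ ⟨c, hc⟩
    exact hab ((hc x).trans (hc y).symm)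

lemma aux_exists_minset {t : Y → Y} (ht : t ∈ S)
    (h2 : 2 ≤ (Set.range t).ncard) : ∃ W, MinSet S W ∧ W ⊆ Set.range t := by
  classical
  set P : ℕ → Prop := fun n => ∃ u, u ∈ S ∧ Set.range u ⊆ Set.range t ∧
      2 ≤ (Set.range u).ncard ∧ (Set.range u).ncard = n with hP
  have hPt : P (Set.range t).ncard := ⟨t, ht, subset_rfl, h2, rfl⟩
  obtain ⟨u, hu, husub, hu2, hun⟩ := Nat.find_spec (⟨_, hPt⟩ : ∃ n, P n)
  refine ⟨Set.range u, ⟨hu2, ⟨u, hu, rfl⟩, ?_⟩, husub⟩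
  intro v hv hv2 hvsub
  have hvP : P (Set.range v).ncard := ⟨v, hv, hvsub.trans husub, hv2, rfl⟩
  have hle : (Set.range u).ncard ≤ (Set.range v).ncard := by
    rw [hun]; exact Nat.find_min' _ hvP
  exact Set.eq_of_subset_of_ncard_le hvsub hle (Set.toFinite _)

lemma aux_exists_nonconst (hcard : 2 < Fintype.card Y)
    (hprim : PrimitiveRep S) : ∃ f ∈ S, ¬ IsConst f := by
  by_contra h
  push_neg at h
  obtain ⟨y0, y1, y2, h01, h02, h12⟩ := Fintype.two_lt_card_iff.mp hcard
  set θ : Y → Y → Prop := fun a b => a = b ∨ (a ≠ y2 ∧ b ≠ y2) with hθ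
  have heqv : Equivalence θ := by
    constructor
    · intro x; exact Or.inl rfl
    · intro x y hxy; rcases hxy with h' | ⟨h1, h2⟩
      · exact Or.inl h'.symm
      · exact Or.inr ⟨h2, h1⟩
    · intro x y z hxy hyz
      rcases hxy with h' | ⟨h1, h2⟩ <;> rcases hyz with g | ⟨g1, g2⟩ <;>
        subst_vars <;> tauto
  have hcompat : ∀ a b, θ a b → ∀ f ∈ S, θ (f a) (f b) := by
    intro a b _ f hf
    obtain ⟨c, hc⟩ := h f hf
    exact Or.inl ((hc a).trans (hc b).symm)
  rcases hprim θ heqv hcompat with hd | hu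
  · have : θ y0 y1 := Or.inr ⟨h02, h12⟩
    exact h01 (hd y0 y1 this)
  · rcases hu y0 y2 with h' | ⟨_, h2⟩
    · exact h02 h'
    · exact h2 rfl

lemma aux_J_nonempty (hcard : 2 < Fintype.card Y)
    (hprim : PrimitiveRep S) : ∃ j, MinFun S j := by
  have : Nonempty Y := by
    rw [← Fintype.card_pos_iff]; omega
  obtain ⟨f, hf, hnc⟩ := aux_exists_nonconst hcard hprim
  obtain ⟨W, hW, _⟩ := aux_exists_minset hf ((aux_not_isConst_iff f).mp hnc)
  obtain ⟨s, hs, hrs⟩ := hW.2.1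
  exact ⟨s, hs, by rw [hrs]; exact hW⟩

lemma aux_sep (hmul : ∀ f ∈ S, ∀ g ∈ S, f ∘ g ∈ S)
    (hprim : PrimitiveRep S) {W : Set Y} (hW : MinSet S W) {a b : Y} (hab : a ≠ b) :
    ∃ p, MinFun S p ∧ Set.range p = W ∧ p a ≠ p b := by
  set θ : Y → Y → Prop := fun c d => ∀ p ∈ S, Set.range p ⊆ W → p c = p d with hθ
  have heqv : Equivalence θ :=
    ⟨fun x p _ _ => rfl, fun h p hp hr => (h p hp hr).symm,
     fun h1 h2 p hp hr => (h1 p hp hr).trans (h2 p hp hr)⟩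
  have hcompat : ∀ c d, θ c d → ∀ f ∈ S, θ (f c) (f d) := by
    intro c d hcd f hf p hp hr
    exact hcd (p ∘ f) (hmul p hp f hf)
      ((Set.range_comp_subset_range f p).trans hr)
  rcases hprim θ heqv hcompat with hd | hu
  · have : ∃ p, p ∈ S ∧ Set.range p ⊆ W ∧ p a ≠ p b := by
      by_contra hcon
      push_neg at hcon
      exact hab (hd a b (fun p hp hr => hcon p hp hr))
    obtain ⟨p, hp, hsub, hne⟩ := this
    have h2 : 2 ≤ (Set.range p).ncard := by
      rw [show (2 ≤ (Set.range p).ncard) ↔ 1 < (Set.range p).ncard from Iff.rfl,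
        Set.one_lt_ncard (Set.toFinite _)]
      exact ⟨p a, ⟨a, rfl⟩, p b, ⟨b, rfl⟩, hne⟩
    have hrp : Set.range p = W := hW.2.2 p hp h2 hsub
    exact ⟨p, ⟨hp, by rw [hrp]; exact hW⟩, hrp, hne⟩
  · exfalso
    obtain ⟨s, hs, hrs⟩ := hW.2.1
    have h2 : 1 < (Set.range s).ncard := by rw [hrs]; exact hW.1
    rw [Set.one_lt_ncard (Set.toFinite _)] at h2
    obtain ⟨u, ⟨x, rfl⟩, v, ⟨y, rfl⟩, huv⟩ := h2
    exact huv (hu x y s hs (by rw [hrs]))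

lemma aux_minset_ncard_le (hmul : ∀ f ∈ S, ∀ g ∈ S, f ∘ g ∈ S)
    (hprim : PrimitiveRep S) {U W : Set Y} (hU : MinSet S U) (hW : MinSet S W) :
    W.ncard ≤ U.ncard := by
  have h2 : 1 < U.ncard := hU.1
  rw [Set.one_lt_ncard (Set.toFinite _)] at h2
  obtain ⟨a, ha, b, hb, hab⟩ := h2
  obtain ⟨p, hp, hrp, hne⟩ := aux_sep hmul hprim hW hab
  obtain ⟨s, hs, hrs⟩ := hU.2.1
  have hq : p ∘ s ∈ S := hmul p hp.1 s hs
  have hrq : Set.range (p ∘ s) = p '' U := by rw [Set.range_comp, hrs]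
  have h2' : 2 ≤ (Set.range (p ∘ s)).ncard := by
    rw [show (2 ≤ (Set.range (p ∘ s)).ncard) ↔ 1 < (Set.range (p ∘ s)).ncard from Iff.rfl,
      Set.one_lt_ncard (Set.toFinite _), hrq]
    exact ⟨p a, ⟨a, ha, rfl⟩, p b, ⟨b, hb, rfl⟩, hne⟩
  have hsub : Set.range (p ∘ s) ⊆ W := by
    rw [hrq]; intro x ⟨y, _, hy⟩; rw [← hy, ← hrp]; exact ⟨y, rfl⟩
  have := hW.2.2 (p ∘ s) hq h2' hsub
  rw [hrq] at this
  rw [← this]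
  exact Set.ncard_image_le (Set.toFinite _)

lemma aux_image_minset (hmul : ∀ f ∈ S, ∀ g ∈ S, f ∘ g ∈ S)
    (hprim : PrimitiveRep S) {U : Set Y} (hU : MinSet S U) {s : Y → Y} (hs : s ∈ S)
    (h2 : 2 ≤ (s '' U).ncard) : MinSet S (s '' U) := by
  obtain ⟨u, hu, hru⟩ := hU.2.1
  have hq : s ∘ u ∈ S := hmul s hs u hu
  have hrq : Set.range (s ∘ u) = s '' U := by rw [Set.range_comp, hru]
  obtain ⟨W, hW, hWsub⟩ := aux_exists_minset hq (by rw [hrq]; exact h2)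
  rw [hrq] at hWsub
  have hcard1 : W.ncard = U.ncard :=
    le_antisymm (aux_minset_ncard_le hmul hprim hU hW) (aux_minset_ncard_le hmul hprim hW hU)
  have hle : (s '' U).ncard ≤ W.ncard := by
    rw [hcard1]; exact Set.ncard_image_le (Set.toFinite _)
  have : W = s '' U := Set.eq_of_subset_of_ncard_le hWsub hle (Set.toFinite _)
  rw [← this]
  exact hW

lemma aux_comp_mem (hmul : ∀ f ∈ S, ∀ g ∈ S, f ∘ g ∈ S)
    (hcard : 2 < Fintype.card Y) (hprim : PrimitiveRep S)
    {s j : Y → Y} (hs : s ∈ S) (hj : MinFun S j) :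
    (s ∘ j) ∈ ExpandConst {f | MinFun S f} ∧ (j ∘ s) ∈ ExpandConst {f | MinFun S f} := by
  have : Nonempty Y := by rw [← Fintype.card_pos_iff]; omega
  constructor
  · by_cases hc : IsConst (s ∘ j)
    · exact Set.mem_union_right _ hc
    · have h2 : 2 ≤ (Set.range (s ∘ j)).ncard := (aux_not_isConst_iff _).mp hc
      refine Set.mem_union_left _ ⟨hmul s hs j hj.1, ?_⟩
      rw [Set.range_comp]
      exact aux_image_minset hmul hprim hj.2 hs (by rw [← Set.range_comp]; exact h2)
  · by_cases hc : IsConst (j ∘ s)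
    · exact Set.mem_union_right _ hc
    · have h2 : 2 ≤ (Set.range (j ∘ s)).ncard := (aux_not_isConst_iff _).mp hc
      have hmem : j ∘ s ∈ S := hmul j hj.1 s hs
      have heq : Set.range (j ∘ s) = Set.range j :=
        hj.2.2.2 (j ∘ s) hmem h2 (Set.range_comp_subset_range s j)
      refine Set.mem_union_left _ ⟨hmem, ?_⟩
      rw [heq]
      exact hj.2

lemma aux_part1 (hmul : ∀ f ∈ S, ∀ g ∈ S, f ∘ g ∈ S)
    (hcard : 2 < Fintype.card Y) (hprim : PrimitiveRep S) :
    ∀ s ∈ ExpandConst S, ∀ j ∈ ExpandConst {f | MinFun S f},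
      s ∘ j ∈ ExpandConst {f | MinFun S f} ∧ j ∘ s ∈ ExpandConst {f | MinFun S f} := by
  intro s hs j hj
  rcases hj with hj | ⟨c, hc⟩
  · rcases hs with hs | ⟨d, hd⟩
    · exact aux_comp_mem hmul hcard hprim hs hj
    · constructor
      · exact Set.mem_union_right _ ⟨d, fun y => hd (j y)⟩
      · exact Set.mem_union_right _ ⟨j d, fun y => by simp only [Function.comp_apply, hd y]⟩
  · constructor
    · exact Set.mem_union_right _ ⟨s c, fun y => by simp only [Function.comp_apply, hc y]⟩
    · exact Set.mem_union_right _ ⟨c, fun y => hc (s y)⟩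

lemma aux_S_sub_Omega (hmul : ∀ f ∈ S, ∀ g ∈ S, f ∘ g ∈ S)
    (hcard : 2 < Fintype.card Y) (hprim : PrimitiveRep S)
    {s : Y → Y} (hs : s ∈ ExpandConst S) :
    s ∈ Omega (ExpandConst {f | MinFun S f}) :=
  fun t ht => aux_part1 hmul hcard hprim s hs t ht

lemma aux_exists_good_j (hmul : ∀ f ∈ S, ∀ g ∈ S, f ∘ g ∈ S)
    (hcard : 2 < Fintype.card Y) (hprim : PrimitiveRep S)
    {F : Y → Y} (hF : F ∈ Omega (ExpandConst {f | MinFun S f})) (hnc : ¬ IsConst F) :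
    ∃ j, MinFun S j ∧ ¬ IsConst (F ∘ j) := by
  have hne : Nonempty Y := by rw [← Fintype.card_pos_iff]; omega
  obtain ⟨a, b, hab⟩ := (Fintype.one_lt_card_iff (α := Y)).mp (by omega)
  set r : Y → Y → Prop := fun x y => ∃ j, MinFun S j ∧ j a = x ∧ j b = y with hr
  have heqv : Equivalence (Relation.EqvGen r) := Relation.EqvGen.is_equivalence r
  have hcompat : ∀ c d, Relation.EqvGen r c d → ∀ f ∈ S,
      Relation.EqvGen r (f c) (f d) := by
    intro c d hcd f hf
    induction hcd with
    | rel x y hxy =>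
      obtain ⟨j, hj, hxa, hyb⟩ := hxy
      rcases (aux_comp_mem hmul hcard hprim hf hj).1 with hmem | ⟨e, he⟩
      · exact Relation.EqvGen.rel _ _
          ⟨f ∘ j, hmem, by rw [Function.comp_apply, hxa], by rw [Function.comp_apply, hyb]⟩
      · have : f x = f y := by
          rw [← hxa, ← hyb]
          exact (he a).trans (he b).symm
        exact this ▸ Relation.EqvGen.refl (f x)
    | refl x => exact Relation.EqvGen.refl _
    | symm x y _ ih => exact Relation.EqvGen.symm _ _ ih
    | trans x y z _ _ ih1 ih2 => exact Relation.EqvGen.trans _ _ _ ih1 ih2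
  rcases hprim _ heqv hcompat with hd | hu
  · exfalso
    obtain ⟨j0, hj0⟩ := aux_J_nonempty hcard hprim
    obtain ⟨p, hp, _, hne'⟩ := aux_sep hmul hprim hj0.2 hab
    exact hne' (hd _ _ (Relation.EqvGen.rel _ _ ⟨p, hp, rfl, rfl⟩))
  · have h2 : 1 < (Set.range F).ncard := (aux_not_isConst_iff F).mp hnc
    rw [Set.one_lt_ncard (Set.toFinite _)] at h2
    obtain ⟨u, ⟨x, rfl⟩, v, ⟨y, rfl⟩, huv⟩ := h2
    have key : ∀ c d, Relation.EqvGen r c d →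
        F c = F d ∨ ∃ j, MinFun S j ∧ ¬ IsConst (F ∘ j) := by
      intro c d hcd
      induction hcd with
      | rel x' y' hxy =>
        obtain ⟨j, hj, rfl, rfl⟩ := hxy
        by_cases h' : F (j a) = F (j b)
        · exact Or.inl h'
        · exact Or.inr ⟨j, hj, fun ⟨e, he⟩ => h' ((he a).trans (he b).symm)⟩
      | refl x' => exact Or.inl rfl
      | symm _ _ _ ih =>
        rcases ih with h | h
        · exact Or.inl h.symm
        · exact Or.inr h
      | trans _ _ _ _ _ ih1 ih2 =>
        rcases ih1 with h1 | h1
        · rcases ih2 with h2 | h2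
          · exact Or.inl (h1.trans h2)
          · exact Or.inr h2
        · exact Or.inr h1
    rcases key x y (hu x y) with h | h
    · exact absurd h huv
    · exact h

lemma aux_idem (hmul : ∀ f ∈ S, ∀ g ∈ S, f ∘ g ∈ S)
    (hprim : PrimitiveRep S) {U : Set Y} (hU : MinSet S U) :
    ∃ e, MinFun S e ∧ Set.range e = U ∧ ∀ x ∈ U, e x = x := by
  classical
  obtain ⟨a, ha, b, hb, hab⟩ := (Set.one_lt_ncard (Set.toFinite _)).mp hU.1
  obtain ⟨p, hp, hrp, hne⟩ := aux_sep hmul hprim hU hab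
  have hmaps : ∀ x, p x ∈ U := fun x => hrp ▸ ⟨x, rfl⟩
  have himg : p '' U = U := by
    have hq : p ∘ p ∈ S := hmul p hp.1 p hp.1
    have hrq : Set.range (p ∘ p) = p '' U := by rw [Set.range_comp, hrp]
    have h2 : 2 ≤ (Set.range (p ∘ p)).ncard := by
      rw [show (2 ≤ (Set.range (p ∘ p)).ncard) ↔ 1 < (Set.range (p ∘ p)).ncard from Iff.rfl,
        Set.one_lt_ncard (Set.toFinite _), hrq]
      exact ⟨p a, ⟨a, ha, rfl⟩, p b, ⟨b, hb, rfl⟩, hne⟩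
    have hsub : Set.range (p ∘ p) ⊆ U := by
      rw [hrq]; rintro x ⟨y, _, rfl⟩; exact hmaps y
    have := hU.2.2 _ hq h2 hsub
    rw [hrq] at this; exact this
  haveI : Finite ↥U := Subtype.finite
  let g : ↥U → ↥U := fun x => ⟨p x, hmaps x⟩
  have hgs : Function.Surjective g := by
    rintro ⟨y, hy⟩
    rw [← himg] at hy
    obtain ⟨x, hx, hpx⟩ := hy
    exact ⟨⟨x, hx⟩, Subtype.ext hpx⟩
  have hgb := Finite.surjective_iff_bijective.mp hgs
  let σ : Equiv.Perm ↥U := Equiv.ofBijective g hgb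
  have hσ : ∀ (k : ℕ) (x : ↥U), p^[k] x = ((σ ^ k) x : Y) := by
    intro k
    induction k with
    | zero => intro x; simp
    | succ k ih =>
      intro x
      rw [Function.iterate_succ_apply, pow_succ, Equiv.Perm.mul_apply]
      have hσx : σ x = ⟨p x, hmaps x⟩ := rfl
      rw [hσx]
      exact ih ⟨p x, hmaps x⟩
  set n := orderOf σ with hndef
  have hn : 0 < n := orderOf_pos σ
  have h1 : σ ^ n = 1 := pow_orderOf_eq_one σ
  have hfix : ∀ x ∈ U, p^[n] x = x := by
    intro x hx
    have := hσ n ⟨x, hx⟩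
    rw [h1] at this
    simpa using this
  have hiter : ∀ k, 0 < k → p^[k] ∈ S := by
    intro k hk
    induction k with
    | zero => omega
    | succ k ih =>
      rcases Nat.eq_zero_or_pos k with h0 | hpos
      · subst h0; simpa using hp.1
      · rw [Function.iterate_succ]
        exact hmul _ (ih hpos) p hp.1
  have hrange : Set.range (p^[n]) = U := by
    obtain ⟨m, hm⟩ : ∃ m, n = m + 1 := ⟨n - 1, by omega⟩
    apply Set.Subset.antisymm
    · rw [hm, Function.iterate_succ']
      rintro x ⟨y, rfl⟩
      exact hmaps _
    · intro x hx
      exact ⟨x, hfix x hx⟩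
  exact ⟨p^[n], ⟨hiter n hn, by rw [hrange]; exact hU⟩, hrange, hfix⟩

lemma aux_omega_min (hmul : ∀ f ∈ S, ∀ g ∈ S, f ∘ g ∈ S)
    (hcard : 2 < Fintype.card Y) (hprim : PrimitiveRep S) {U : Set Y} (hU : MinSet S U) :
    ∀ t ∈ Omega (ExpandConst {f | MinFun S f}), 2 ≤ (Set.range t).ncard →
      Set.range t ⊆ U → Set.range t = U := by
  intro t ht h2 hsub
  have h2' := h2
  rw [show (2 ≤ (Set.range t).ncard) ↔ 1 < (Set.range t).ncard from Iff.rfl,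
    Set.one_lt_ncard (Set.toFinite _)] at h2'
  obtain ⟨u, ⟨x, rfl⟩, v, ⟨y, rfl⟩, huv⟩ := h2'
  obtain ⟨p, hp, hrp, hne⟩ := aux_sep hmul hprim hU huv
  rcases (ht p (Set.mem_union_left _ hp)).2 with hpt | ⟨c, hc⟩
  · have h2'' : 2 ≤ (Set.range (p ∘ t)).ncard := hpt.2.1
    have hsub' : Set.range (p ∘ t) ⊆ U := by
      rw [← hrp]; exact Set.range_comp_subset_range t p
    have heq : Set.range (p ∘ t) = U := hU.2.2 _ hpt.1 h2'' hsub'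
    rw [Set.range_comp] at heq
    have hle : U.ncard ≤ (Set.range t).ncard := by
      rw [← heq]; exact Set.ncard_image_le (Set.toFinite _)
    exact Set.eq_of_subset_of_ncard_le hsub hle (Set.toFinite _)
  · exact absurd ((hc x).trans (hc y).symm) hne

end Aux

/-- Let `(Y;S)` be a (faithful) primitive representation with `|Y| > 2`, where `S` is a
semigroup of transformations of `Y`, and let `J` be its set of minimal functions.  Then:
(1) `S^Y ⊆ Ω(J^Y)`, i.e. for every `s ∈ S^Y` and `j ∈ J^Y`, both `s∘j` and `j∘s` lie in
`J^Y`; and (2) the representation `(Y; Ω(J^Y))` is faithful and primitive, and its set of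
minimal functions is exactly `J`. -/
theorem semigroup_in_translational_hull {Y : Type*} [Fintype Y]
    (S : Set (Y → Y)) (hmul : ∀ f ∈ S, ∀ g ∈ S, f ∘ g ∈ S)
    (hcard : 2 < Fintype.card Y)
    (hprim : PrimitiveRep S) :
    (∀ s ∈ ExpandConst S, ∀ j ∈ ExpandConst {f | MinFun S f},
      s ∘ j ∈ ExpandConst {f | MinFun S f} ∧
        j ∘ s ∈ ExpandConst {f | MinFun S f}) ∧
    (∀ f ∈ Omega (ExpandConst {f | MinFun S f}),
      ∀ g ∈ Omega (ExpandConst {f | MinFun S f}), (∀ y, f y = g y) → f = g) ∧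
    PrimitiveRep (Omega (ExpandConst {f | MinFun S f})) ∧
    {f | f ∈ Omega (ExpandConst {g | MinFun S g}) ∧
        MinFun (Omega (ExpandConst {g | MinFun S g})) f} =
      {f | MinFun S f} := by
  have hney : Nonempty Y := by rw [← Fintype.card_pos_iff]; omega
  refine ⟨aux_part1 hmul hcard hprim, fun f _ g _ h => funext h, ?_, ?_⟩
  · -- primitivity of the hull
    intro θ heqv hcompat
    exact hprim θ heqv (fun a b hab f hf =>
      hcompat a b hab f (aux_S_sub_Omega hmul hcard hprim (Set.mem_union_left _ hf)))
  · ext f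
    simp only [Set.mem_setOf_eq]
    constructor
    · rintro ⟨hfΩ, hmf⟩
      have hnc : ¬ IsConst f := by
        rw [aux_not_isConst_iff]
        exact hmf.2.1
      obtain ⟨j, hj, hncj⟩ := aux_exists_good_j hmul hcard hprim hfΩ hnc
      have hfj : f ∘ j ∈ ExpandConst {f | MinFun S f} :=
        (hfΩ j (Set.mem_union_left _ hj)).1
      rcases hfj with hfj | hfj
      swap
      · exact absurd hfj hncj
      -- hfj : MinFun S (f ∘ j)
      have hfjΩ : f ∘ j ∈ Omega (ExpandConst {f | MinFun S f}) :=
        aux_S_sub_Omega hmul hcard hprim (Set.mem_union_left _ hfj.1)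
      have heq : Set.range (f ∘ j) = Set.range f :=
        hmf.2.2.2 (f ∘ j) hfjΩ hfj.2.1 (Set.range_comp_subset_range j f)
      have hminS : MinSet S (Set.range f) := by
        rw [← heq]; exact hfj.2
      obtain ⟨e, he, hre, hid⟩ := aux_idem hmul hprim hminS
      have hef : e ∘ f = f := funext fun y => hid (f y) ⟨y, rfl⟩
      have hefmem : e ∘ f ∈ ExpandConst {f | MinFun S f} :=
        (hfΩ e (Set.mem_union_left _ he)).2
      rw [hef] at hefmem
      rcases hefmem with hm | hm
      · exact hm
      · exact absurd hm hnc
    · intro hj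
      have hfΩ : f ∈ Omega (ExpandConst {g | MinFun S g}) :=
        aux_S_sub_Omega hmul hcard hprim (Set.mem_union_left _ hj.1)
      exact ⟨hfΩ, hfΩ, hj.2.1, ⟨f, hfΩ, rfl⟩, aux_omega_min hmul hcard hprim hj.2⟩
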